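/- Let c and e be real numbers with c ≠ 1 and e > 0, and let 0 < z < 1/2. Then Σ_{k=0}^∞ (c)_k/((k+1)·(e)_k)·(z/(z−1))^k = ((z−1)(e−c)/(c−1))·Σ_{k=0}^∞ (e−c+1)_k z^k/((k+1)·(e)_k) + ((e−1)(1−z)/((c−1)z))·ln(1/(1−z)). (This is the relation ₃F₂(1,1,c; 2,e; z/(z−1)) = ((z−1)(e−c)/(c−1))·₃F₂(1,1,e−c+1; 2,e; z) + ((e−1)(1−z)/((c−1)z))·ln(1/(1−z)).) -/

import Mathlib

open Real Finset Filter Topology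

/-- Rising factorial (Pochhammer symbol) `(a)_k`. -/
noncomputable def poch (a : ℝ) (k : ℕ) : ℝ := (ascPochhammer ℝ k).eval a

lemma poch_zero (a : ℝ) : poch a 0 = 1 := by simp [poch]

lemma poch_succ (a : ℝ) (k : ℕ) : poch a (k + 1) = poch a k * (a + k) := by
  simp [poch, ascPochhammer_succ_right, Polynomial.eval_mul]

lemma poch_succ_left (a : ℝ) (k : ℕ) : poch a (k + 1) = a * poch (a + 1) k := by
  have := ascPochhammer_succ_left (S := ℝ) k
  simp [poch, this, Polynomial.eval_comp]

lemma poch_pos {e : ℝ} (he : 0 < e) (k : ℕ) : 0 < poch e k := by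
  induction k with
  | zero => simp [poch_zero]
  | succ n ih => rw [poch_succ]; positivity

lemma poch_add (a : ℝ) (m k : ℕ) : poch a (m + k) = poch a m * poch (a + m) k := by
  have := ascPochhammer_mul (S := ℝ) m k
  have h2 := congrArg (Polynomial.eval a) this
  simpa [poch, Polynomial.eval_comp] using h2.symm

lemma alt_pascal (t : ℕ → ℝ) (n : ℕ) :
    ∑ k ∈ range (n + 2), (-1 : ℝ) ^ k * ((n + 1).choose k) * t k
      = ∑ k ∈ range (n + 1), (-1 : ℝ) ^ k * (n.choose k) * (t k - t (k + 1)) := by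
  have hA : ∑ k ∈ range (n + 1), (-1 : ℝ) ^ k * (n.choose k) * t k
      = (∑ k ∈ range n, (-1 : ℝ) ^ (k+1) * (n.choose (k+1)) * t (k+1)) + t 0 := by
    rw [Finset.sum_range_succ' (fun k => (-1 : ℝ) ^ k * (n.choose k) * t k) n]
    simp
  have hext : ∑ k ∈ range (n + 1), (-1 : ℝ) ^ (k+1) * (n.choose (k+1)) * t (k+1)
      = ∑ k ∈ range n, (-1 : ℝ) ^ (k+1) * (n.choose (k+1)) * t (k+1) := by
    rw [Finset.sum_range_succ]
    simp [Nat.choose_succ_self]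
  rw [Finset.sum_range_succ' (fun k => (-1 : ℝ) ^ k * ((n + 1).choose k) * t k) (n+1)]
  have : ∀ k ∈ range (n + 1), (-1 : ℝ) ^ (k+1) * ((n + 1).choose (k+1)) * t (k+1)
      = (-1 : ℝ) ^ (k+1) * (n.choose k) * t (k+1)
        + (-1 : ℝ) ^ (k+1) * (n.choose (k+1)) * t (k+1) := by
    intro k _
    rw [Nat.choose_succ_succ]
    push_cast
    ring
  rw [Finset.sum_congr rfl this, Finset.sum_add_distrib, hext]
  have hR : ∑ k ∈ range (n + 1), (-1 : ℝ) ^ k * (n.choose k) * (t k - t (k + 1))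
      = ∑ k ∈ range (n + 1), (-1 : ℝ) ^ k * (n.choose k) * t k
        + ∑ k ∈ range (n + 1), (-1 : ℝ) ^ (k+1) * (n.choose k) * t (k+1) := by
    rw [← Finset.sum_add_distrib]
    exact Finset.sum_congr rfl fun k _ => by ring
  rw [hR]
  simp only [Nat.choose_zero_right, Nat.cast_one, pow_zero, one_mul, mul_one]
  linarith [hA]

lemma chu : ∀ (n : ℕ) (c e : ℝ), 0 < e →
    ∑ k ∈ range (n + 1), (-1 : ℝ) ^ k * (n.choose k) * (poch c k / poch e k)
      = poch (e - c) n / poch e n := by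
  intro n
  induction n with
  | zero => intro c e he; simp [poch_zero]
  | succ n ih =>
    intro c e he
    rw [show n + 1 + 1 = n + 2 from rfl,
      alt_pascal (fun k => poch c k / poch e k) n]
    have step : ∀ k ∈ range (n + 1),
        (-1 : ℝ) ^ k * (n.choose k) * (poch c k / poch e k - poch c (k+1) / poch e (k+1))
          = ((e - c) / e) * ((-1 : ℝ) ^ k * (n.choose k) * (poch c k / poch (e+1) k)) := by
      intro k _
      have hpe := (poch_pos he k).ne'
      have hpe1 := (poch_pos (by linarith : (0:ℝ) < e + 1) k).ne'
      have hek : (0:ℝ) < e + k := by positivity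
      have hkey : poch e k * (e + k) = e * poch (e + 1) k := by
        rw [← poch_succ, poch_succ_left]
      have hp1 : poch (e+1) k = poch e k * (e + k) / e := by
        rw [eq_div_iff he.ne']; linarith [hkey]
      rw [poch_succ c k, poch_succ e k, hp1]
      field_simp
      ring
    rw [Finset.sum_congr rfl step, ← Finset.mul_sum, ih c (e+1) (by linarith)]
    have h1 : e + 1 - c = e - c + 1 := by ring
    rw [h1, poch_succ_left (e - c) n, poch_succ_left e n]
    have hpe1 := (poch_pos (by linarith : (0:ℝ) < e + 1) n).ne'
    field_simp

lemma wsum (t : ℕ → ℝ) : ∀ m : ℕ,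
    ∑ j ∈ range (m + 1), ∑ k ∈ range (j + 1), (-1 : ℝ) ^ k * (j.choose k) * t k
      = ∑ k ∈ range (m + 1), (-1 : ℝ) ^ k * ((m + 1).choose (k + 1)) * t k := by
  intro m
  induction m with
  | zero => simp
  | succ m ih =>
    rw [Finset.sum_range_succ _ (m+1), ih]
    have hr : ∀ k ∈ range (m + 2),
        (-1 : ℝ) ^ k * ((m + 2).choose (k + 1)) * t k
          = (-1 : ℝ) ^ k * ((m + 1).choose k) * t k
            + (-1 : ℝ) ^ k * ((m + 1).choose (k + 1)) * t k := by
      intro k _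
      rw [show m + 2 = (m + 1) + 1 from rfl, Nat.choose_succ_succ (m+1) k]
      push_cast; ring
    rw [Finset.sum_congr rfl hr, Finset.sum_add_distrib]
    have hext : ∑ k ∈ range (m + 2), (-1 : ℝ) ^ k * ((m + 1).choose (k + 1)) * t k
        = ∑ k ∈ range (m + 1), (-1 : ℝ) ^ k * ((m + 1).choose (k + 1)) * t k := by
      rw [Finset.sum_range_succ]
      simp [Nat.choose_succ_self]
    rw [hext]
    ring

lemma sumr (c e : ℝ) (hc : c ≠ 1) (he : 0 < e) : ∀ n : ℕ,
    ∑ m ∈ range (n + 1), poch (e - c) m / poch e m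
      = ((e - 1) - poch (e - c) (n + 1) / poch e n) / (c - 1) := by
  have hc1 : c - 1 ≠ 0 := sub_ne_zero.mpr hc
  intro n
  induction n with
  | zero =>
    rw [Finset.sum_range_one, poch_succ, poch_zero, poch_zero]
    push_cast
    field_simp
    ring
  | succ n ih =>
    rw [Finset.sum_range_succ, ih]
    have hq := (poch_pos he n).ne'
    have hq1 := (poch_pos he (n+1)).ne'
    rw [poch_succ (e - c) (n+1), poch_succ e n]
    have hen : e + (n:ℝ) ≠ 0 := by positivity
    field_simp
    push_cast
    ring

lemma Wlem (c e : ℝ) (hc : c ≠ 1) (he : 0 < e) (m : ℕ) :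
    ∑ k ∈ range (m + 1), (-1 : ℝ) ^ k * (m.choose k) * (poch c k / ((k + 1) * poch e k))
      = ((e - 1) - poch (e - c) (m + 1) / poch e m) / ((c - 1) * (m + 1)) := by
  have hc1 : c - 1 ≠ 0 := sub_ne_zero.mpr hc
  have hm1 : ((m : ℝ) + 1) ≠ 0 := by positivity
  have big := wsum (fun k => poch c k / poch e k) m
  have hchu : ∀ j ∈ range (m + 1),
      (∑ k ∈ range (j + 1), (-1 : ℝ) ^ k * (j.choose k) * (poch c k / poch e k))
        = poch (e - c) j / poch e j := fun j _ => chu j c e he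
  rw [Finset.sum_congr rfl hchu, sumr c e hc he m] at big
  have hterm : ∀ k ∈ range (m + 1),
      (-1 : ℝ) ^ k * (((m + 1).choose (k + 1) : ℕ)) * (poch c k / poch e k)
        = ((m : ℝ) + 1) * ((-1 : ℝ) ^ k * (m.choose k) * (poch c k / ((k + 1) * poch e k))) := by
    intro k _
    have hch : ((m : ℝ) + 1) * (m.choose k) = (((m + 1).choose (k + 1) : ℕ)) * ((k : ℝ) + 1) := by
      have := Nat.add_one_mul_choose_eq m k
      have := congrArg (Nat.cast (R := ℝ)) this
      push_cast at this
      linarith [this]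
    have hpe := (poch_pos he k).ne'
    have hk1 : ((k : ℝ) + 1) ≠ 0 := by positivity
    field_simp
    linear_combination (-(poch c k)) * hch
  rw [Finset.sum_congr rfl hterm, ← Finset.mul_sum] at big
  have big2 : (e - 1) - poch (e - c) (m + 1) / poch e m
      = (c - 1) * (((m : ℝ) + 1) * ∑ k ∈ range (m + 1),
          (-1 : ℝ) ^ k * (m.choose k) * (poch c k / ((k + 1) * poch e k))) := by
    rw [← big]; field_simp
  rw [big2]
  field_simp

lemma keylem (c e : ℝ) (hc : c ≠ 1) (he : 0 < e) (n : ℕ) :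
    ∑ k ∈ range (n + 2),
        (-1 : ℝ) ^ k * (poch c k / ((k + 1) * poch e k)) * ((n.choose (n + 1 - k) : ℕ))
      = (e - c) / (c - 1) * (poch (e - c + 1) n / ((n + 1) * poch e n)
          - poch (e - c + 1) (n + 1) / ((n + 2) * poch e (n + 1)))
        + (e - 1) / (c - 1) * (1 / (n + 2) - 1 / (n + 1)) := by
  have hc1 : c - 1 ≠ 0 := sub_ne_zero.mpr hc
  have hn1 : ((n : ℝ) + 1) ≠ 0 := by positivity
  have hn2 : ((n : ℝ) + 2) ≠ 0 := by positivity
  -- Step 1: rewrite LHS as -(A)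
  set A := ∑ k ∈ range (n + 1),
      (-1 : ℝ) ^ k * (n.choose k) * (poch c (k + 1) / ((k + 2) * poch e (k + 1))) with hA
  have h1 : ∑ k ∈ range (n + 2),
      (-1 : ℝ) ^ k * (poch c k / ((k + 1) * poch e k)) * ((n.choose (n + 1 - k) : ℕ)) = -A := by
    rw [Finset.sum_range_succ' (fun k =>
      (-1 : ℝ) ^ k * (poch c k / ((k + 1) * poch e k)) * ((n.choose (n + 1 - k) : ℕ))) (n + 1)]
    have hz : ((n.choose (n + 1 - 0) : ℕ) : ℝ) = 0 := by
      rw [Nat.choose_eq_zero_of_lt (by omega)]; simp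
    simp only [hz, pow_zero, one_mul, mul_zero, add_zero]
    rw [hA, ← Finset.sum_neg_distrib]
    refine Finset.sum_congr rfl fun k hk => ?_
    have hkn : k ≤ n := by simpa [Nat.lt_succ_iff] using hk
    have hsymm : n + 1 - (k + 1) = n - k := by omega
    rw [hsymm, Nat.choose_symm hkn]
    push_cast
    ring
  rw [h1]
  -- Step 2: V - W = -(n+1) * A
  have hV := chu (n + 1) c e he
  have hW := Wlem c e hc he (n + 1)
  push_cast at hW
  have hsub : poch (e - c) (n + 1) / poch e (n + 1)
      - ((e - 1) - poch (e - c) (n + 2) / poch e (n + 1)) / ((c - 1) * (n + 1 + 1))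
      = -(((n : ℝ) + 1) * A) := by
    rw [← hV, ← hW, ← Finset.sum_sub_distrib]
    rw [Finset.sum_range_succ' (fun k => (-1 : ℝ) ^ k * ((n + 1).choose k) * (poch c k / poch e k)
      - (-1 : ℝ) ^ k * ((n + 1).choose k) * (poch c k / ((k + 1) * poch e k))) (n + 1)]
    have hz0 : ((-1 : ℝ) ^ 0 * ((n + 1).choose 0) * (poch c 0 / poch e 0)
        - (-1 : ℝ) ^ 0 * ((n + 1).choose 0) * (poch c 0 / ((((0:ℕ):ℝ) + 1) * poch e 0))) = 0 := by
      simp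
    rw [hz0, add_zero, hA, Finset.mul_sum, ← Finset.sum_neg_distrib]
    refine Finset.sum_congr rfl fun k hk => ?_
    have hch : (((n + 1).choose (k + 1) : ℕ) : ℝ) * ((k : ℝ) + 1) = ((n : ℝ) + 1) * (n.choose k) := by
      have := congrArg (Nat.cast (R := ℝ)) (Nat.add_one_mul_choose_eq n k)
      push_cast at this
      linarith [this]
    have hpe := (poch_pos he (k + 1)).ne'
    have hk1 : ((k : ℝ) + 1) ≠ 0 := by positivity
    have hk2 : ((k : ℝ) + 2) ≠ 0 := by positivity
    field_simp
    push_cast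
    linear_combination (-((-1 : ℝ) ^ k * poch c (k + 1) * ((k:ℝ) + 2))) * hch
  -- Step 3: conclude
  have hAval : -A = (poch (e - c) (n + 1) / poch e (n + 1)
      - ((e - 1) - poch (e - c) (n + 2) / poch e (n + 1)) / ((c - 1) * (n + 1 + 1))) / ((n : ℝ) + 1) := by
    rw [hsub]; field_simp
  rw [hAval]
  -- Step 4: pure algebra
  have hq := (poch_pos he n).ne'
  have hq1 := (poch_pos he (n + 1)).ne'
  have hen : (e + (n : ℝ)) ≠ 0 := by positivity
  rw [poch_succ_left (e - c) (n + 1), poch_succ (e - c + 1) n, poch_succ_left (e - c) n,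
    poch_succ e n]
  push_cast
  field_simp
  ring

lemma choose_le_two_pow (n k : ℕ) : n.choose k ≤ 2 ^ n := by
  rcases le_or_gt k n with h | h
  · calc n.choose k ≤ ∑ i ∈ range (n + 1), n.choose i :=
        Finset.single_le_sum (fun i _ => Nat.zero_le _) (Finset.mem_range.mpr (by omega))
      _ = 2 ^ n := Nat.sum_range_choose n
  · rw [Nat.choose_eq_zero_of_lt h]; exact Nat.zero_le _

lemma sumP {z : ℝ} (hz0 : 0 < z) (hz : z < 1/2) (k : ℕ) :
    Summable (fun j : ℕ => (((k + j).choose j : ℕ) : ℝ) * z ^ j) := by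
  have h2z : 2 * z < 1 := by linarith
  refine Summable.of_nonneg_of_le (fun j => by positivity) (fun j => ?_)
    ((summable_geometric_of_lt_one (by linarith) h2z).mul_left ((2 : ℝ) ^ k))
  have h1 : (((k + j).choose j : ℕ) : ℝ) ≤ 2 ^ (k + j) := by
    exact_mod_cast choose_le_two_pow (k + j) j
  have h2 : ((2 : ℝ)) ^ (k + j) * z ^ j = 2 ^ k * (2 * z) ^ j := by
    rw [pow_add, mul_pow]; ring
  calc (((k + j).choose j : ℕ) : ℝ) * z ^ j ≤ 2 ^ (k + j) * z ^ j := by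
        apply mul_le_mul_of_nonneg_right h1 (by positivity)
    _ = 2 ^ k * (2 * z) ^ j := h2

lemma Paux {z : ℝ} (hz0 : 0 < z) (hz : z < 1/2) : ∀ k : ℕ,
    HasSum (fun j : ℕ => (((k + j).choose j : ℕ) : ℝ) * z ^ j) ((1 / (1 - z)) ^ (k + 1)) := by
  have h1z : (0 : ℝ) < 1 - z := by linarith
  intro k
  induction k with
  | zero =>
    have := hasSum_geometric_of_lt_one (le_of_lt hz0) (by linarith : z < 1)
    have heq : (fun j : ℕ => (((0 + j).choose j : ℕ) : ℝ) * z ^ j) = fun j : ℕ => z ^ j := by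
      funext j; rw [Nat.zero_add, Nat.choose_self]; simp
    rw [heq, pow_one]
    rw [one_div]
    convert this using 1
  | succ k ih =>
    have hT := sumP hz0 hz (k + 1)
    set T := ∑' j : ℕ, (((k + 1 + j).choose j : ℕ) : ℝ) * z ^ j with hTdef
    have hshift : T = 1 + ∑' j : ℕ, (((k + 1 + (j + 1)).choose (j + 1) : ℕ) : ℝ) * z ^ (j + 1) := by
      rw [hTdef, Summable.tsum_eq_zero_add hT]; simp
    have hsum1 : Summable (fun j : ℕ => (((k + 1 + j).choose j : ℕ) : ℝ) * z ^ (j + 1)) := by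
      have := hT.mul_right z
      refine this.congr fun j => ?_
      rw [pow_succ]; ring
    have hsum2 : Summable (fun j : ℕ => (((k + (j + 1)).choose (j + 1) : ℕ) : ℝ) * z ^ (j + 1)) := by
      have h2z : 2 * z < 1 := by linarith
      refine Summable.of_nonneg_of_le (fun j => by positivity) (fun j => ?_)
        ((summable_geometric_of_lt_one (by linarith) h2z).mul_left ((2 : ℝ) ^ (k + 1) * z))
      have h1 : (((k + (j + 1)).choose (j + 1) : ℕ) : ℝ) ≤ 2 ^ (k + (j + 1)) := by
        exact_mod_cast choose_le_two_pow (k + (j + 1)) (j + 1)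
      calc (((k + (j + 1)).choose (j + 1) : ℕ) : ℝ) * z ^ (j + 1)
          ≤ 2 ^ (k + (j + 1)) * z ^ (j + 1) := by
            apply mul_le_mul_of_nonneg_right h1 (by positivity)
        _ = 2 ^ (k + 1) * z * (2 * z) ^ j := by
            rw [show k + (j + 1) = (k + 1) + j from by omega, pow_add, mul_pow, pow_succ]
            ring
    have hsplit : ∀ j : ℕ, (((k + 1 + (j + 1)).choose (j + 1) : ℕ) : ℝ) * z ^ (j + 1)
        = (((k + 1 + j).choose j : ℕ) : ℝ) * z ^ (j + 1)
          + (((k + (j + 1)).choose (j + 1) : ℕ) : ℝ) * z ^ (j + 1) := by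
      intro j
      have e1 : k + 1 + (j + 1) = (k + j + 1) + 1 := by omega
      have e2 : k + 1 + j = k + j + 1 := by omega
      have e3 : k + (j + 1) = k + j + 1 := by omega
      rw [e1, e2, e3, Nat.choose_succ_succ]
      push_cast; ring
    have hval1 : ∑' j : ℕ, (((k + 1 + j).choose j : ℕ) : ℝ) * z ^ (j + 1) = z * T := by
      rw [hTdef, ← tsum_mul_left]
      exact tsum_congr fun j => by rw [pow_succ]; ring
    have hval2 : ∑' j : ℕ, (((k + (j + 1)).choose (j + 1) : ℕ) : ℝ) * z ^ (j + 1)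
        = (1 / (1 - z)) ^ (k + 1) - 1 := by
      have h0 := Summable.tsum_eq_zero_add (sumP hz0 hz k)
      rw [ih.tsum_eq] at h0
      simp only [pow_zero, mul_one, Nat.add_zero, Nat.choose_zero_right, Nat.cast_one] at h0
      linarith [h0]
    have hgrow : T = 1 + (z * T + ((1 / (1 - z)) ^ (k + 1) - 1)) := by
      conv_lhs => rw [hshift]
      rw [tsum_congr hsplit, Summable.tsum_add hsum1 hsum2, hval1, hval2]
    have hTval : T = (1 / (1 - z)) ^ (k + 1 + 1) := by
      have hmul : T * (1 - z) = (1 / (1 - z)) ^ (k + 1) := by nlinarith [hgrow]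
      have : T = (1 / (1 - z)) ^ (k + 1) / (1 - z) := by
        rw [← hmul]; field_simp
      rw [this, pow_succ]
      field_simp
      rw [show k + 1 + 1 = k + 2 from rfl, pow_add, mul_comm, mul_assoc, one_div_pow (1 - z) 2,
        one_div_mul_cancel (pow_ne_zero 2 h1z.ne'), mul_one]
    exact hTval ▸ hT.hasSum

lemma Plem {z : ℝ} (hz0 : 0 < z) (hz : z < 1/2) (k : ℕ) :
    HasSum (fun j : ℕ => (((k + j - 1).choose j : ℕ) : ℝ) * z ^ j) ((1 / (1 - z)) ^ k) := by
  cases k with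
  | zero =>
    have hfun : ∀ j : ℕ, j ≠ 0 → (((0 + j - 1).choose j : ℕ) : ℝ) * z ^ j = 0 := by
      intro j hj; rw [Nat.choose_eq_zero_of_lt (by omega)]; simp
    have := hasSum_single (f := fun j : ℕ => (((0 + j - 1).choose j : ℕ) : ℝ) * z ^ j) 0 hfun
    simpa using this
  | succ k =>
    have h := Paux hz0 hz k
    have hfun : (fun j : ℕ => (((k + 1 + j - 1).choose j : ℕ) : ℝ) * z ^ j)
        = fun j : ℕ => (((k + j).choose j : ℕ) : ℝ) * z ^ j := by
      funext j; rw [show k + 1 + j - 1 = k + j from by omega]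
    rw [hfun]
    exact h

lemma ratio_summable (c e v : ℝ) (he : 0 < e) (hv0 : 0 < v) (hv : v < 1) :
    Summable (fun k : ℕ => |poch c k| / (((k : ℝ) + 1) * poch e k) * v ^ k) := by
  by_cases hzero : ∃ K, poch c K = 0
  · obtain ⟨K, hK⟩ := hzero
    apply summable_of_ne_finset_zero (s := range (K + 1))
    intro k hk
    have hKk : K ≤ k := by
      by_contra h
      exact hk (Finset.mem_range.mpr (by omega))
    obtain ⟨d, rfl⟩ := Nat.exists_eq_add_of_le hKk
    rw [poch_add, hK]
    simp
  · push_neg at hzero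
    set f := fun k : ℕ => |poch c k| / (((k : ℝ) + 1) * poch e k) * v ^ k with hf
    have hfpos : ∀ k, 0 < f k := by
      intro k
      have h1 : 0 < |poch c k| := abs_pos.mpr (hzero k)
      have h2 : 0 < poch e k := poch_pos he k
      positivity
    refine summable_of_ratio_test_tendsto_lt_one hv
      (Filter.Eventually.of_forall fun k => (hfpos k).ne') ?_
    -- the ratio equals v * (|c+k|/(e+k) * ((k+1)/(k+2)))
    have hratio : ∀ k : ℕ, ‖f (k + 1)‖ / ‖f k‖
        = v * (|c + (k : ℝ)| / (e + k) * (((k : ℝ) + 1) / ((k : ℝ) + 2))) := by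
      intro k
      rw [Real.norm_eq_abs, Real.norm_eq_abs, abs_of_pos (hfpos (k + 1)), abs_of_pos (hfpos k)]
      rw [hf]
      simp only
      rw [poch_succ c k, poch_succ e k, abs_mul]
      have h2 : 0 < poch e k := poch_pos he k
      have h3 : (0:ℝ) < e + k := by positivity
      have h4 : 0 < |poch c k| := abs_pos.mpr (hzero k)
      have hk1 : ((k:ℝ) + 1) ≠ 0 := by positivity
      have hk2 : ((k:ℝ) + 1 + 1) ≠ 0 := by positivity
      have hvk : (0:ℝ) < v ^ k := by positivity
      field_simp
      push_cast
      ring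
    have h1 : Tendsto (fun k : ℕ => |c + (k : ℝ)| / (e + k)) atTop (𝓝 1) := by
      have hd : Tendsto (fun k : ℕ => e + (k : ℝ)) atTop atTop :=
        tendsto_atTop_add_const_left _ e tendsto_natCast_atTop_atTop
      have h0 : Tendsto (fun k : ℕ => (c - e) / (e + (k : ℝ))) atTop (𝓝 0) :=
        tendsto_const_nhds.div_atTop hd
      have h0' : Tendsto (fun k : ℕ => 1 + (c - e) / (e + (k : ℝ))) atTop (𝓝 1) := by
        simpa using h0.const_add 1
      refine h0'.congr' ?_
      filter_upwards [eventually_ge_atTop (Nat.ceil |c|)] with k hk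
      have hck : |c| ≤ (k : ℝ) := le_trans (Nat.le_ceil _) (by exact_mod_cast hk)
      have hcpos : 0 ≤ c + (k : ℝ) := by
        have := neg_abs_le c; linarith
      have h3 : (0:ℝ) < e + k := by positivity
      rw [abs_of_nonneg hcpos]
      field_simp
      ring
    have h2 : Tendsto (fun k : ℕ => ((k : ℝ) + 1) / ((k : ℝ) + 2)) atTop (𝓝 1) := by
      have hd : Tendsto (fun k : ℕ => (k : ℝ) + 2) atTop atTop :=
        tendsto_atTop_add_const_right _ 2 tendsto_natCast_atTop_atTop
      have h0 : Tendsto (fun k : ℕ => (-1 : ℝ) / ((k : ℝ) + 2)) atTop (𝓝 0) :=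
        tendsto_const_nhds.div_atTop hd
      have h0' : Tendsto (fun k : ℕ => 1 + (-1 : ℝ) / ((k : ℝ) + 2)) atTop (𝓝 1) := by
        simpa using h0.const_add 1
      refine h0'.congr fun k => ?_
      have : ((k : ℝ) + 2) ≠ 0 := by positivity
      field_simp
      ring
    have h3 : Tendsto (fun k : ℕ => v * (|c + (k : ℝ)| / (e + k) * (((k : ℝ) + 1) / ((k : ℝ) + 2))))
        atTop (𝓝 v) := by
      have := (h1.mul h2).const_mul v
      simpa using this
    exact h3.congr fun k => (hratio k).symm

set_option maxHeartbeats 1000000 in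
/-- the transformation of `₃F₂(1,1,c;2,e;z/(z-1))`. -/
theorem threeF2_log_transformation (c e z : ℝ) (hc : c ≠ 1) (he : 0 < e)
    (hz0 : 0 < z) (hz : z < 1/2) :
    ∑' k : ℕ, poch c k / ((k + 1 : ℝ) * poch e k) * (z / (z - 1)) ^ k =
      ((z - 1) * (e - c) / (c - 1)) *
        ∑' k : ℕ, poch (e - c + 1) k * z ^ k / ((k + 1 : ℝ) * poch e k) +
      ((e - 1) * (1 - z) / ((c - 1) * z)) * Real.log (1 / (1 - z)) := by
  have h1z : (0 : ℝ) < 1 - z := by linarith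
  have hz1 : z < 1 := by linarith
  have hzne : z ≠ 0 := hz0.ne'
  have hc1 : c - 1 ≠ 0 := sub_ne_zero.mpr hc
  -- the double-indexed family
  set g : ℕ × ℕ → ℝ := fun p =>
    (-1 : ℝ) ^ p.1 * (poch c p.1 / ((p.1 + 1 : ℝ) * poch e p.1))
      * (((p.1 + p.2 - 1).choose p.2 : ℕ) : ℝ) * z ^ (p.1 + p.2) with hg
  -- row sums in k
  have hwk : ∀ k : ℕ, (z / (z - 1)) ^ k = (-1 : ℝ) ^ k * z ^ k * (1 / (1 - z)) ^ k := by
    intro k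
    have hbase : z / (z - 1) = -1 * z * (1 / (1 - z)) := by
      rw [div_eq_iff (by linarith : z - 1 ≠ 0)]
      field_simp
      ring
    rw [hbase, mul_pow, mul_pow]
  have hgk : ∀ k : ℕ, HasSum (fun j => g (k, j))
      ((poch c k / ((k + 1 : ℝ) * poch e k)) * (z / (z - 1)) ^ k) := by
    intro k
    have hP := (Plem hz0 hz k).mul_left
      ((-1 : ℝ) ^ k * (poch c k / ((k + 1 : ℝ) * poch e k)) * z ^ k)
    have hfun : (fun j => ((-1 : ℝ) ^ k * (poch c k / ((k + 1 : ℝ) * poch e k)) * z ^ k)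
        * ((((k + j - 1).choose j : ℕ) : ℝ) * z ^ j)) = fun j => g (k, j) := by
      funext j
      simp only [hg]
      rw [pow_add]
      ring
    have hval : (-1 : ℝ) ^ k * (poch c k / ((k + 1 : ℝ) * poch e k)) * z ^ k * (1 / (1 - z)) ^ k
        = (poch c k / ((k + 1 : ℝ) * poch e k)) * (z / (z - 1)) ^ k := by
      rw [hwk k]; ring
    rw [hfun, hval] at hP
    exact hP
  -- summability of |g|
  set v : ℝ := z * (1 / (1 - z)) with hv
  have hv0 : 0 < v := by positivity
  have hv1 : v < 1 := by
    rw [hv]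
    rw [mul_one_div, div_lt_one h1z]
    linarith
  have habs_slice : ∀ k : ℕ, Summable (fun j => |g (k, j)|) := by
    intro k
    refine ((Plem hz0 hz k).summable.mul_left
      (|poch c k / ((k + 1 : ℝ) * poch e k)| * z ^ k)).congr fun j => ?_
    simp only [hg]
    rw [abs_mul, abs_mul, abs_mul, abs_pow, abs_pow, abs_neg, abs_one, one_pow, one_mul,
      abs_of_pos hz0, Nat.abs_cast, pow_add]
    ring
  have habs_sum : Summable (fun k => ∑' j, |g (k, j)|) := by
    refine (ratio_summable c e v he hv0 hv1).congr fun k => ?_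
    have h1 : ∑' j, |g (k, j)| = (|poch c k / ((k + 1 : ℝ) * poch e k)| * z ^ k)
        * ((1 / (1 - z)) ^ k) := by
      have := ((Plem hz0 hz k).mul_left
        (|poch c k / ((k + 1 : ℝ) * poch e k)| * z ^ k)).tsum_eq
      rw [← this]
      refine tsum_congr fun j => ?_
      simp only [hg]
      rw [abs_mul, abs_mul, abs_mul, abs_pow, abs_pow, abs_neg, abs_one, one_pow, one_mul,
        abs_of_pos hz0, Nat.abs_cast, pow_add]
      ring
    rw [h1]
    have hd : 0 < ((k : ℝ) + 1) * poch e k := by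
      have := poch_pos he k
      positivity
    rw [abs_div, abs_of_pos hd, hv, mul_pow]
    ring
  have hgabs : Summable (fun p : ℕ × ℕ => |g p|) :=
    (summable_prod_of_nonneg (fun p => abs_nonneg _)).2 ⟨habs_slice, habs_sum⟩
  have hgsum : Summable g := hgabs.of_abs
  -- LHS as a double sum
  have hLHS : ∑' k : ℕ, poch c k / ((k + 1 : ℝ) * poch e k) * (z / (z - 1)) ^ k
      = ∑' p : ℕ × ℕ, g p := by
    rw [Summable.tsum_prod' hgsum (fun k => (hgk k).summable)]
    exact tsum_congr fun k => ((hgk k).tsum_eq).symm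
  -- group by antidiagonals
  have hgsig : Summable (fun x : Σ n : ℕ, Finset.HasAntidiagonal.antidiagonal n => g x.2) :=
    Finset.HasAntidiagonal.sigmaAntidiagonalEquivProd.summable_iff.2 hgsum
  have hgrouped : ∑' p : ℕ × ℕ, g p = ∑' n : ℕ, ∑ kl ∈ Finset.HasAntidiagonal.antidiagonal n, g kl := by
    conv_rhs => congr; ext; rw [← Finset.sum_finset_coe, ← tsum_fintype (L := .unconditional _)]
    rw [← Finset.HasAntidiagonal.sigmaAntidiagonalEquivProd.tsum_eq g]
    exact Summable.tsum_sigma' (fun n => (hasSum_fintype _).summable) hgsig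
  have hrowsum : Summable (fun n : ℕ => ∑ kl ∈ Finset.HasAntidiagonal.antidiagonal n, g kl) := by
    conv => congr; ext; rw [← Finset.sum_finset_coe, ← tsum_fintype (L := .unconditional _)]
    exact hgsig.sigma' fun n => (hasSum_fintype _).summable
  -- evaluate rows
  have hrow : ∀ n : ℕ, (∑ kl ∈ Finset.HasAntidiagonal.antidiagonal n, g kl)
      = z ^ n * ∑ k ∈ range (n + 1),
          (-1 : ℝ) ^ k * (poch c k / ((k + 1 : ℝ) * poch e k)) * ((n - 1).choose (n - k) : ℕ) := by
    intro n
    rw [Finset.Nat.sum_antidiagonal_eq_sum_range_succ_mk, Finset.mul_sum]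
    refine Finset.sum_congr rfl fun k hk => ?_
    have hkn : k ≤ n := by
      have := Finset.mem_range.mp hk; omega
    simp only [hg]
    rw [Nat.add_sub_cancel' hkn]
    ring
  have hrow0 : (∑ kl ∈ Finset.HasAntidiagonal.antidiagonal 0, g kl) = 1 := by
    rw [hrow 0]
    norm_num [poch_zero]
  have hrow1 : ∀ n : ℕ, (∑ kl ∈ Finset.HasAntidiagonal.antidiagonal (n + 1), g kl)
      = (e - c) / (c - 1) * (z ^ (n + 1) * (poch (e - c + 1) n / (((n : ℝ) + 1) * poch e n))
          - poch (e - c + 1) (n + 1) * z ^ (n + 1) / (((n : ℝ) + 2) * poch e (n + 1)))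
        + (e - 1) / (c - 1) * (z ^ (n + 1) / ((n : ℝ) + 2) - z ^ (n + 1) / ((n : ℝ) + 1)) := by
    intro n
    rw [hrow (n + 1)]
    simp only [Nat.add_sub_cancel]
    rw [show n + 1 + 1 = n + 2 from rfl, keylem c e hc he n]
    push_cast
    ring
  -- summabilities on the n side
  have hBsum : Summable (fun n : ℕ => poch (e - c + 1) n * z ^ n / ((n + 1 : ℝ) * poch e n)) := by
    refine Summable.of_abs ((ratio_summable (e - c + 1) e z he hz0 hz1).congr fun n => ?_)
    have hd : (0:ℝ) < ((n : ℝ) + 1) * poch e n := by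
      have := poch_pos he n; positivity
    rw [abs_div, abs_mul, abs_pow, abs_of_pos hz0, abs_of_pos hd]
    ring
  have hlog : HasSum (fun n : ℕ => z ^ (n + 1) / ((n : ℝ) + 1)) (Real.log (1 / (1 - z))) := by
    have h := Real.hasSum_pow_div_log_of_abs_lt_one (x := z) (by rw [abs_of_pos hz0]; linarith)
    rw [one_div, Real.log_inv]
    exact h
  have hSu : Summable (fun n : ℕ =>
      z ^ (n + 1) * (poch (e - c + 1) n / (((n : ℝ) + 1) * poch e n))) := by
    refine (hBsum.mul_left z).congr fun n => ?_
    rw [pow_succ]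
    ring
  have hSw : Summable (fun n : ℕ =>
      poch (e - c + 1) (n + 1) * z ^ (n + 1) / (((n : ℝ) + 2) * poch e (n + 1))) := by
    have h0 : Summable (fun n : ℕ =>
        poch (e - c + 1) (n + 1) * z ^ (n + 1) / (((n + 1 : ℕ) + 1 : ℝ) * poch e (n + 1))) :=
      (summable_nat_add_iff 1).2 hBsum
    refine h0.congr fun n => ?_
    push_cast
    ring_nf
  have hSs : Summable (fun n : ℕ => z ^ (n + 1) / ((n : ℝ) + 2)) := by
    have h0 : Summable (fun n : ℕ => z ^ ((n + 1) + 1) / (((n + 1 : ℕ) : ℝ) + 1)) :=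
      (summable_nat_add_iff 1).2 hlog.summable
    refine (h0.mul_left (1 / z)).congr fun n => ?_
    push_cast
    field_simp
    ring
  have hSt : Summable (fun n : ℕ => z ^ (n + 1) / ((n : ℝ) + 1)) := hlog.summable
  -- values
  set B := ∑' k : ℕ, poch (e - c + 1) k * z ^ k / ((k + 1 : ℝ) * poch e k) with hB
  set L := Real.log (1 / (1 - z)) with hL
  have hvu : ∑' n : ℕ, z ^ (n + 1) * (poch (e - c + 1) n / (((n : ℝ) + 1) * poch e n))
      = z * B := by
    rw [hB, ← tsum_mul_left]
    exact tsum_congr fun n => by rw [pow_succ]; ring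
  have hvw : ∑' n : ℕ, poch (e - c + 1) (n + 1) * z ^ (n + 1) / (((n : ℝ) + 2) * poch e (n + 1))
      = B - 1 := by
    have h0 := Summable.tsum_eq_zero_add hBsum
    rw [← hB] at h0
    have hz00 : poch (e - c + 1) 0 * z ^ 0 / ((((0:ℕ):ℝ) + 1) * poch e 0) = 1 := by
      norm_num [poch_zero]
    have h1 : ∑' n : ℕ, poch (e - c + 1) (n + 1) * z ^ (n + 1) / (((n : ℝ) + 2) * poch e (n + 1))
        = ∑' n : ℕ, poch (e - c + 1) (n + 1) * z ^ (n + 1) / ((((n + 1 : ℕ)) + 1 : ℝ) * poch e (n + 1)) := by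
      exact tsum_congr fun n => by push_cast; ring_nf
    rw [h1]
    rw [hz00] at h0
    linarith [h0]
  have hvs : ∑' n : ℕ, z ^ (n + 1) / ((n : ℝ) + 2) = (1 / z) * (L - z) := by
    have h0 := Summable.tsum_eq_zero_add hlog.summable
    rw [hlog.tsum_eq] at h0
    have hz00 : z ^ (0 + 1) / (((0:ℕ):ℝ) + 1) = z := by norm_num
    rw [hz00] at h0
    have h1 : ∑' n : ℕ, z ^ (n + 1) / ((n : ℝ) + 2)
        = (1 / z) * ∑' n : ℕ, z ^ ((n + 1) + 1) / (((n + 1 : ℕ) : ℝ) + 1) := by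
      rw [← tsum_mul_left]
      refine tsum_congr fun n => ?_
      push_cast
      field_simp
      ring
    rw [h1]
    have h2 : ∑' n : ℕ, z ^ ((n + 1) + 1) / (((n + 1 : ℕ) : ℝ) + 1) = L - z := by
      linarith [h0]
    rw [h2]
  have hvt : ∑' n : ℕ, z ^ (n + 1) / ((n : ℝ) + 1) = L := by exact hlog.tsum_eq
  -- final assembly
  rw [hLHS, hgrouped, Summable.tsum_eq_zero_add hrowsum, hrow0]
  have hcong : ∑' n : ℕ, (∑ kl ∈ Finset.HasAntidiagonal.antidiagonal (n + 1), g kl)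
      = ∑' n : ℕ, ((e - c) / (c - 1) * (z ^ (n + 1) * (poch (e - c + 1) n / (((n : ℝ) + 1) * poch e n))
          - poch (e - c + 1) (n + 1) * z ^ (n + 1) / (((n : ℝ) + 2) * poch e (n + 1)))
        + (e - 1) / (c - 1) * (z ^ (n + 1) / ((n : ℝ) + 2) - z ^ (n + 1) / ((n : ℝ) + 1))) :=
    tsum_congr fun n => hrow1 n
  rw [hcong, Summable.tsum_add ((hSu.sub hSw).mul_left _) ((hSs.sub hSt).mul_left _), tsum_mul_left,
    tsum_mul_left, Summable.tsum_sub hSu hSw, Summable.tsum_sub hSs hSt, hvu, hvw, hvs, hvt]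
  field_simp
  ring
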